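/- arXiv:1811.03183 — 3 statements merged into one kernel-verified Lean document; each statement's English description precedes it below -/
import Mathlib

section
/- For distinct reals $x_1,\dots,x_N$ and $y_1,\dots,y_N$ with $x_j + y_k \neq 0$ for all $j,k$, the determinant of the $N\times N$ matrix with entries $1/(x_j+y_k)$ equals $\prod_{1\le j<k\le N}(x_k-x_j)(y_k-y_j) / \prod_{j,k=1}^N (x_j+y_k)$. -/
open Finset Matrix

theorem cauchy_aux : ∀ (N : ℕ) (x y : Fin N → ℝ), (∀ j k, x j + y k ≠ 0) →
    Matrix.det (Matrix.of fun j k : Fin N => 1 / (x j + y k)) =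
      (∏ j : Fin N, ∏ k ∈ Finset.Ioi j, (x k - x j) * (y k - y j)) /
        ∏ j : Fin N, ∏ k : Fin N, (x j + y k) := by
  intro N
  induction N with
  | zero => intro x y hxy; simp
  | succ N ih =>
    intro x y hxy
    -- abbreviations
    set v : Fin (N+1) → ℝ := fun j => (x j + y 0)⁻¹ with hv
    set w : Fin (N+1) → ℝ := fun k => if k = 0 then 1 else y 0 - y k with hw
    set u : Fin (N+1) → ℝ := fun i => if i = 0 then 1 else x 0 - x i with hu
    set t : Fin (N+1) → ℝ := fun k => if k = 0 then 1 else (x 0 + y k)⁻¹ with ht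
    set C : Matrix (Fin (N+1)) (Fin (N+1)) ℝ :=
      Matrix.of (fun j k => if k = 0 then 1 else 1/(x j + y k)) with hC
    set H : Matrix (Fin (N+1)) (Fin (N+1)) ℝ :=
      Matrix.of (fun i k => if i = 0 then 1 else if k = 0 then 0 else 1/(x i + y k)) with hH
    have h1 : (Matrix.of fun j k : Fin (N+1) => 1/(x j + y k)).det
        = (Matrix.of fun j k : Fin (N+1) => v j * (w k * C j k)).det := by
      rw [← Matrix.det_transpose (Matrix.of fun j k : Fin (N+1) => 1/(x j + y k)),
        ← Matrix.det_transpose (Matrix.of fun j k : Fin (N+1) => v j * (w k * C j k))]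
      apply Matrix.det_eq_of_forall_row_eq_smul_add_const
        (fun k : Fin (N+1) => if k = 0 then (0:ℝ) else 1) 0 (by simp)
      intro i j
      simp only [Matrix.transpose_apply, Matrix.of_apply, hv, hw, hC]
      by_cases hi : i = 0
      · subst hi; simp [one_div]
      · simp only [if_neg hi, eq_self_iff_true, if_true]
        have h1 := hxy j i; have h2 := hxy j 0
        field_simp
        ring
    have h2 : (Matrix.of fun j k : Fin (N+1) => v j * (w k * C j k)).det
        = (∏ j, v j) * ((∏ k, w k) * C.det) := by
      have e : (Matrix.of fun j k : Fin (N+1) => v j * (w k * C j k))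
          = Matrix.of (fun j k => v j * (Matrix.of fun j k : Fin (N+1) => w k * C j k) j k) := rfl
      rw [e, Matrix.det_mul_column, Matrix.det_mul_row]
    have h3 : C.det = (Matrix.of fun i k : Fin (N+1) => u i * (t k * H i k)).det := by
      apply Matrix.det_eq_of_forall_row_eq_smul_add_const
        (fun i : Fin (N+1) => if i = 0 then (0:ℝ) else 1) 0 (by simp)
      intro i j
      simp only [Matrix.of_apply, hu, ht, hH, hC]
      by_cases hi : i = 0
      · subst hi; simp [one_div]
      · simp only [if_neg hi]
        by_cases hj : j = 0
        · subst hj; simp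
        · simp only [if_neg hj, if_pos rfl, eq_self_iff_true, if_true]
          have h1 := hxy i j; have h2 := hxy 0 j
          field_simp
          ring
    have h4 : (Matrix.of fun i k : Fin (N+1) => u i * (t k * H i k)).det
        = (∏ i, u i) * ((∏ k, t k) * H.det) := by
      have e : (Matrix.of fun i k : Fin (N+1) => u i * (t k * H i k))
          = Matrix.of (fun i k => u i * (Matrix.of fun i k : Fin (N+1) => t k * H i k) i k) := rfl
      rw [e, Matrix.det_mul_column, Matrix.det_mul_row]
    have h5 : H.det = (Matrix.of fun i k : Fin N => 1/(x i.succ + y k.succ)).det := by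
      rw [Matrix.det_succ_column_zero, Fin.sum_univ_succ]
      simp [hH, Fin.succ_ne_zero, Matrix.submatrix]
    have h6 : (Matrix.of fun i k : Fin N => 1/(x i.succ + y k.succ)).det
        = (∏ j : Fin N, ∏ k ∈ Finset.Ioi j, (x k.succ - x j.succ) * (y k.succ - y j.succ)) /
          ∏ j : Fin N, ∏ k : Fin N, (x j.succ + y k.succ) := by
      exact ih (fun i => x i.succ) (fun k => y k.succ) (fun j k => hxy j.succ k.succ)
    rw [h1, h2, h3, h4, h5, h6]
    -- now pure product algebra
    rw [Fin.prod_univ_succ (fun j => ∏ k ∈ Finset.Ioi j, (x k - x j) * (y k - y j))]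
    rw [Fin.prod_Ioi_zero]
    simp_rw [Fin.prod_Ioi_succ]
    rw [Fin.prod_univ_succ (fun j => ∏ k : Fin (N+1), (x j + y k))]
    simp_rw [Fin.prod_univ_succ (fun k => x _ + y k)]
    rw [Fin.prod_univ_succ v, Fin.prod_univ_succ w, Fin.prod_univ_succ u, Fin.prod_univ_succ t]
    simp only [hv, hw, hu, ht, if_pos rfl, if_neg (Fin.succ_ne_zero _), one_mul]
    have key : ∏ k : Fin N, (x k.succ - x 0) * (y k.succ - y 0)
        = (∏ i : Fin N, (x 0 - x i.succ)) * (∏ k : Fin N, (y 0 - y k.succ)) := by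
      rw [← Finset.prod_mul_distrib]
      exact Finset.prod_congr rfl (fun i _ => by ring)
    rw [key]
    have hd : x 0 + y 0 ≠ 0 := hxy 0 0
    have hS : (∏ j : Fin N, (x j.succ + y 0)) ≠ 0 :=
      Finset.prod_ne_zero_iff.mpr (fun j _ => hxy j.succ 0)
    have hT : (∏ k : Fin N, (x 0 + y k.succ)) ≠ 0 :=
      Finset.prod_ne_zero_iff.mpr (fun k _ => hxy 0 k.succ)
    have hQ : (∏ j : Fin N, ∏ k : Fin N, (x j.succ + y k.succ)) ≠ 0 :=
      Finset.prod_ne_zero_iff.mpr (fun j _ =>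
        Finset.prod_ne_zero_iff.mpr (fun k _ => hxy j.succ k.succ))
    rw [Finset.prod_mul_distrib, Finset.prod_inv_distrib, Finset.prod_inv_distrib]
    field_simp

/-- Cauchy double alternant identity. -/
theorem cauchy_double_alternant (N : ℕ) (x y : Fin N → ℝ)
    (hx : Function.Injective x) (hy : Function.Injective y)
    (hxy : ∀ j k, x j + y k ≠ 0) :
    Matrix.det (Matrix.of fun j k : Fin N => 1 / (x j + y k)) =
      (∏ j : Fin N, ∏ k ∈ Finset.Ioi j, (x k - x j) * (y k - y j)) /
        ∏ j : Fin N, ∏ k : Fin N, (x j + y k) := by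
  exact cauchy_aux N x y hxy
end

section
/- Let $\alpha > -1$ and let $u, v$ be complex numbers with $u+v \ne \alpha+1$. Then for every positive integer $N$, $\sum_{n=0}^{N-1} (2n+\alpha+1) \frac{\Gamma(\alpha+n-u+1)\Gamma(\alpha+n-v+1)}{\Gamma(n+1+u)\Gamma(n+1+v)} = \frac{1}{1-\alpha-u-v}\left(\frac{\Gamma(\alpha+N+1-u)\Gamma(\alpha+N+1-v)}{\Gamma(N+u)\Gamma(N+v)} - \frac{\Gamma(\alpha+1-u)\Gamma(\alpha+1-v)}{\Gamma(u)\Gamma(v)}\right)$, provided no Gamma function in the expression is evaluated at a nonpositive integer. -/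
set_option maxHeartbeats 1000000 in
/-- Telescoping Christoffel–Darboux-type summation identity for ratios of Gamma
functions. The hypotheses ensure no Gamma function in the expression is
evaluated at a nonpositive integer (equivalently, all the Gamma values are
nonzero). -/
theorem cd_gamma_sum (α : ℝ) (hα : -1 < α) (u v : ℂ) (huv : u + v ≠ (α:ℂ) + 1)
    (N : ℕ) (hN : 0 < N)
    (hu : Complex.Gamma u ≠ 0) (hv : Complex.Gamma v ≠ 0)
    (hden : ∀ n : ℕ, n ≤ N →
      Complex.Gamma ((n:ℂ) + u) ≠ 0 ∧ Complex.Gamma ((n:ℂ) + v) ≠ 0)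
    (hnum : ∀ n : ℕ, n ≤ N →
      Complex.Gamma ((α:ℂ) + n + 1 - u) ≠ 0 ∧ Complex.Gamma ((α:ℂ) + n + 1 - v) ≠ 0) :
    (∑ n ∈ Finset.range N, (2 * (n:ℂ) + (α:ℂ) + 1) *
        (Complex.Gamma ((α:ℂ) + n - u + 1) * Complex.Gamma ((α:ℂ) + n - v + 1) /
          (Complex.Gamma ((n:ℂ) + 1 + u) * Complex.Gamma ((n:ℂ) + 1 + v)))) =
      (1 / (1 + (α:ℂ) - u - v)) *
        (Complex.Gamma ((α:ℂ) + N + 1 - u) * Complex.Gamma ((α:ℂ) + N + 1 - v) /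
            (Complex.Gamma ((N:ℂ) + u) * Complex.Gamma ((N:ℂ) + v)) -
          Complex.Gamma ((α:ℂ) + 1 - u) * Complex.Gamma ((α:ℂ) + 1 - v) /
            (Complex.Gamma u * Complex.Gamma v)) := by
  have hc : (1 + (α:ℂ) - u - v) ≠ 0 := by
    intro h
    exact huv (by linear_combination -h)
  set f : ℕ → ℂ := fun n =>
    Complex.Gamma ((α:ℂ) + n + 1 - u) * Complex.Gamma ((α:ℂ) + n + 1 - v) /
      (Complex.Gamma ((n:ℂ) + u) * Complex.Gamma ((n:ℂ) + v)) with hf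
  have key : ∀ n ∈ Finset.range N,
      (2 * (n:ℂ) + (α:ℂ) + 1) *
        (Complex.Gamma ((α:ℂ) + n - u + 1) * Complex.Gamma ((α:ℂ) + n - v + 1) /
          (Complex.Gamma ((n:ℂ) + 1 + u) * Complex.Gamma ((n:ℂ) + 1 + v))) =
      (1 / (1 + (α:ℂ) - u - v)) * (f (n + 1) - f n) := by
    intro n hn
    rw [Finset.mem_range] at hn
    obtain ⟨hGu, hGv⟩ := hden n hn.le
    obtain ⟨hAu, hAv⟩ := hnum n hn.le
    have hnu : (n:ℂ) + u ≠ 0 := fun h => hGu (h ▸ Complex.Gamma_zero)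
    have hnv : (n:ℂ) + v ≠ 0 := fun h => hGv (h ▸ Complex.Gamma_zero)
    have e1 : Complex.Gamma ((α:ℂ) + n - u + 1) = Complex.Gamma ((α:ℂ) + n + 1 - u) := by
      ring_nf
    have e2 : Complex.Gamma ((α:ℂ) + n - v + 1) = Complex.Gamma ((α:ℂ) + n + 1 - v) := by
      ring_nf
    have g1 : Complex.Gamma ((n:ℂ) + 1 + u) = ((n:ℂ) + u) * Complex.Gamma ((n:ℂ) + u) := by
      rw [show (n:ℂ) + 1 + u = ((n:ℂ) + u) + 1 by ring, Complex.Gamma_add_one _ hnu]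
    have g2 : Complex.Gamma ((n:ℂ) + 1 + v) = ((n:ℂ) + v) * Complex.Gamma ((n:ℂ) + v) := by
      rw [show (n:ℂ) + 1 + v = ((n:ℂ) + v) + 1 by ring, Complex.Gamma_add_one _ hnv]
    have hau : (α:ℂ) + n + 1 - u ≠ 0 := fun h => hAu (h ▸ Complex.Gamma_zero)
    have hav : (α:ℂ) + n + 1 - v ≠ 0 := fun h => hAv (h ▸ Complex.Gamma_zero)
    have g3 : Complex.Gamma ((α:ℂ) + (↑(n+1):ℂ) + 1 - u)
        = ((α:ℂ) + n + 1 - u) * Complex.Gamma ((α:ℂ) + n + 1 - u) := by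
      push_cast
      rw [show (α:ℂ) + ((n:ℂ) + 1) + 1 - u = ((α:ℂ) + n + 1 - u) + 1 by ring,
        Complex.Gamma_add_one _ hau]
    have g4 : Complex.Gamma ((α:ℂ) + (↑(n+1):ℂ) + 1 - v)
        = ((α:ℂ) + n + 1 - v) * Complex.Gamma ((α:ℂ) + n + 1 - v) := by
      push_cast
      rw [show (α:ℂ) + ((n:ℂ) + 1) + 1 - v = ((α:ℂ) + n + 1 - v) + 1 by ring,
        Complex.Gamma_add_one _ hav]
    have g5 : ((↑(n+1):ℂ)) + u = (n:ℂ) + 1 + u := by push_cast; ring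
    have g6 : ((↑(n+1):ℂ)) + v = (n:ℂ) + 1 + v := by push_cast; ring
    simp only [hf, g3, g4, g5, g6, g1, g2, e1, e2]
    generalize Complex.Gamma ((α:ℂ) + (n:ℂ) + 1 - u) = A
    generalize Complex.Gamma ((α:ℂ) + (n:ℂ) + 1 - v) = B
    generalize hGu' : Complex.Gamma ((n:ℂ) + u) = Gu at hGu
    generalize hGv' : Complex.Gamma ((n:ℂ) + v) = Gv at hGv
    have hpq : (((n:ℂ) + u) * ((n:ℂ) + v)) ≠ 0 := mul_ne_zero hnu hnv
    have h7 : A * B / (Gu * Gv) =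
        (((n:ℂ) + u) * ((n:ℂ) + v)) * (A * B) /
          (((n:ℂ) + u) * Gu * (((n:ℂ) + v) * Gv)) := by
      rw [show ((n:ℂ) + u) * Gu * (((n:ℂ) + v) * Gv)
            = (((n:ℂ) + u) * ((n:ℂ) + v)) * (Gu * Gv) by ring,
        mul_div_mul_left _ _ hpq]
    rw [h7, div_sub_div_same]
    simp only [← mul_div_assoc]
    congr 1
    rw [one_div, eq_comm, inv_mul_eq_iff_eq_mul₀ hc]
    ring
  rw [Finset.sum_congr rfl key, ← Finset.mul_sum, Finset.sum_range_sub]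
  congr 1
  simp only [hf]
  norm_num
end

section
/- (Schur's Pfaffian identity, even case) For an even positive integer $N$ and distinct positive reals $x_1, \dots, x_N$, the Pfaffian of the antisymmetric matrix $A$ with entries $a_{jk} = \frac{x_k - x_j}{x_k + x_j}$ equals $\prod_{1 \le j < k \le N} \frac{x_k - x_j}{x_k + x_j}$. -/
/-- The Pfaffian of a `2m × 2m` antisymmetric matrix, defined by
`Pf(A) = (1/(2^m m!)) ∑_{σ ∈ S_{2m}} sgn(σ) ∏_{i=1}^m a_{σ(2i-1),σ(2i)}`. -/
noncomputable def pfaffian {m : ℕ} (A : Matrix (Fin (2 * m)) (Fin (2 * m)) ℝ) : ℝ :=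
  (1 / (2 ^ m * (m.factorial : ℝ))) *
    ∑ σ : Equiv.Perm (Fin (2 * m)), ((Equiv.Perm.sign σ : ℤ) : ℝ) *
      ∏ i : Fin m,
        A (σ ⟨2 * i.1, by have := i.isLt; omega⟩) (σ ⟨2 * i.1 + 1, by have := i.isLt; omega⟩)

open Finset Polynomial

namespace SchurAux

variable {ι : Type*} [DecidableEq ι]

lemma prod_neg' {s : Finset ι} (f : ι → ℝ[X]) :
    ∏ i ∈ s, (-f i) = (-1) ^ s.card * ∏ i ∈ s, f i := by
  rw [← prod_const, ← prod_mul_distrib]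
  exact prod_congr rfl fun i _ => by ring

theorem sum_Ck (S : Finset ι) (y : ι → ℝ) (hodd : Odd S.card)
    (hy : ∀ i ∈ S, 0 < y i) (hinj : Set.InjOn y S) :
    ∑ k ∈ S, ∏ l ∈ S.erase k, ((y l + y k) / (y l - y k)) = 1 := by
  classical
  set n := S.card with hn
  have hn1 : 1 ≤ n := Nat.one_le_iff_ne_zero.2 (by rintro h; exact (by simp [h] : ¬ Odd 0) (h ▸ hodd))
  have hsub : ∀ k ∈ S, ∀ l ∈ S, l ≠ k → y l - y k ≠ 0 := by
    intro k hk l hl hlk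
    exact sub_ne_zero.2 fun h => hlk (hinj hl hk h)
  set Ck : ι → ℝ := fun k => ∏ l ∈ S.erase k, ((y l + y k) / (y l - y k)) with hCk
  set NP : ℝ[X] := ∏ l ∈ S, (X + C (y l)) with hNP
  set NM : ℝ[X] := ∏ l ∈ S, (C (y l) - X) with hNM
  set PP : ℝ[X] := ∑ k ∈ S, C (Ck k) * ∏ l ∈ S.erase k, (X + C (y l)) with hPP
  have hCkprod : ∀ j ∈ S, Ck j * ∏ l ∈ S.erase j, (y l - y j) = ∏ l ∈ S.erase j, (y l + y j) := by
    intro j hj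
    rw [hCk, ← prod_mul_distrib]
    exact prod_congr rfl fun l hl => div_mul_cancel₀ _
      (hsub j hj l (mem_of_mem_erase hl) (ne_of_mem_erase hl))
  have hD : NP - NM - 2 * (X * PP) = 0 := by
    apply eq_zero_of_natDegree_lt_card_of_eval_eq_zero' _
      (insert (0:ℝ) (S.image fun l => -(y l)))
    · intro i hi
      rcases mem_insert.1 hi with rfl | hi
      · have h1 : eval 0 NP = ∏ l ∈ S, y l := by
          rw [hNP, eval_prod]; exact prod_congr rfl fun l _ => by simp
        have h2 : eval 0 NM = ∏ l ∈ S, y l := by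
          rw [hNM, eval_prod]; exact prod_congr rfl fun l _ => by simp
        simp [h1, h2]
      · obtain ⟨j, hj, rfl⟩ := mem_image.1 hi
        have hNPj : eval (-(y j)) NP = 0 := by
          rw [hNP, eval_prod]
          exact prod_eq_zero hj (by simp)
        have hNMj : eval (-(y j)) NM = ∏ l ∈ S, (y l + y j) := by
          rw [hNM, eval_prod]
          exact prod_congr rfl fun l _ => by simp [sub_neg_eq_add]
        have hPPj : eval (-(y j)) PP = ∏ l ∈ S.erase j, (y l + y j) := by
          rw [hPP, eval_finset_sum]
          rw [Finset.sum_eq_single j]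
          · rw [eval_mul, eval_C, eval_prod]
            have : ∀ l ∈ S.erase j, eval (-(y j)) (X + C (y l)) = y l - y j := by
              intro l _; simp; ring
            rw [prod_congr rfl this]
            exact hCkprod j hj
          · intro k hk hkj
            rw [eval_mul, eval_prod]
            have : eval (-(y j)) (X + C (y j)) = 0 := by simp
            rw [prod_eq_zero (mem_erase.2 ⟨Ne.symm hkj, hj⟩) this, mul_zero]
          · intro h; exact absurd hj h
        rw [eval_sub, eval_sub, eval_mul, eval_mul, eval_X, hNPj, hNMj, hPPj, eval_ofNat]
        rw [← Finset.mul_prod_erase S _ hj]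
        ring
    · have hdegNP : NP.natDegree ≤ n := by
        refine le_trans (natDegree_prod_le _ _) ?_
        refine le_trans (Finset.sum_le_card_nsmul _ _ 1 fun l _ => by simp [natDegree_X_add_C]) ?_
        simp only [smul_eq_mul, mul_one]; omega
      have hdegNM : NM.natDegree ≤ n := by
        refine le_trans (natDegree_prod_le _ _) ?_
        refine le_trans (Finset.sum_le_card_nsmul _ _ 1 fun l _ => ?_) (by simp only [smul_eq_mul, mul_one]; omega)
        have : (C (y l) - X : ℝ[X]) = -(X - C (y l)) := by ring
        rw [this, natDegree_neg, natDegree_X_sub_C]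
      have hdegPP : PP.natDegree ≤ n - 1 := by
        refine le_trans (natDegree_sum_le _ _) ?_
        rw [Finset.fold_max_le]
        refine ⟨Nat.zero_le _, fun k hk => ?_⟩
        refine le_trans (natDegree_C_mul_le _ _) ?_
        refine le_trans (natDegree_prod_le _ _) ?_
        refine le_trans (Finset.sum_le_card_nsmul _ _ 1 fun l _ => by simp [natDegree_X_add_C]) ?_
        simp only [smul_eq_mul, mul_one, card_erase_of_mem hk]; omega
      have hdeg2 : (2 * (X * PP) : ℝ[X]).natDegree ≤ n := by
        refine le_trans (natDegree_mul_le) ?_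
        have : (X * PP : ℝ[X]).natDegree ≤ 1 + (n-1) := le_trans natDegree_mul_le (by
          simp [natDegree_X]; exact hdegPP)
        simpa using le_trans this (by omega)
      have hcard : (insert (0:ℝ) (S.image fun l => -(y l))).card = n + 1 := by
        rw [card_insert_of_notMem, card_image_of_injOn]
        · intro a ha b hb h
          exact hinj ha hb (neg_injective h)
        · intro h
          obtain ⟨j, hj, hjj⟩ := mem_image.1 h
          have := hy j hj; linarith
      rw [hcard]
      have : (NP - NM - 2 * (X * PP)).natDegree ≤ n :=
        le_trans (natDegree_sub_le _ _) (by
          refine max_le (le_trans (natDegree_sub_le _ _) (max_le hdegNP hdegNM)) hdeg2)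
      omega
  -- now compare coefficient n
  have hmonNP : NP.Monic := monic_prod_of_monic _ _ fun l _ => monic_X_add_C _
  have hdegNP : NP.natDegree = n := by
    rw [hNP, natDegree_prod _ _ fun l _ => (monic_X_add_C (y l)).ne_zero]
    simp [natDegree_X_add_C, hn]
  have hcNP : NP.coeff n = 1 := by
    rw [← hdegNP]; exact hmonNP.coeff_natDegree
  have hcNM : NM.coeff n = -1 := by
    have hthis : NM = C ((-1:ℝ) ^ n) * ∏ l ∈ S, (X - C (y l)) := by
      rw [hNM, show (∏ l ∈ S, (C (y l) - X) : ℝ[X]) = ∏ l ∈ S, -(X - C (y l)) from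
        prod_congr rfl fun l _ => by ring, prod_neg', ← hn, map_pow, map_neg, map_one]
    have hmon : (∏ l ∈ S, (X - C (y l)) : ℝ[X]).Monic :=
      monic_prod_of_monic _ _ fun l _ => monic_X_sub_C _
    have hd : (∏ l ∈ S, (X - C (y l)) : ℝ[X]).natDegree = n := by
      rw [natDegree_prod _ _ fun l _ => (monic_X_sub_C (y l)).ne_zero]
      simp [natDegree_X_sub_C, hn]
    rw [hthis, coeff_C_mul, hodd.neg_one_pow, ← hd, hmon.coeff_natDegree, mul_one]
  have hEq : NP - NM = 2 * (X * PP) := by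
    linear_combination hD
  have hcoeff := congrArg (fun p : ℝ[X] => p.coeff n) hEq
  simp only [coeff_sub, hcNP, hcNM] at hcoeff
  have h2 : (2 * (X * PP) : ℝ[X]).coeff n = 2 * PP.coeff (n - 1) := by
    have h2c : (2 : ℝ[X]) = C 2 := (map_ofNat C 2).symm
    obtain ⟨n', hn'⟩ : ∃ n', n = n' + 1 := ⟨n - 1, by omega⟩
    rw [h2c, coeff_C_mul, hn', coeff_X_mul]
    norm_num
  have hPPc : PP.coeff (n - 1) = ∑ k ∈ S, Ck k := by
    rw [hPP, finset_sum_coeff]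
    refine Finset.sum_congr rfl fun k hk => ?_
    rw [coeff_C_mul]
    have hmon : (∏ l ∈ S.erase k, (X + C (y l)) : ℝ[X]).Monic :=
      monic_prod_of_monic _ _ fun l _ => monic_X_add_C _
    have hd : (∏ l ∈ S.erase k, (X + C (y l)) : ℝ[X]).natDegree = n - 1 := by
      rw [natDegree_prod _ _ fun l _ => (monic_X_add_C (y l)).ne_zero]
      simp [natDegree_X_add_C, card_erase_of_mem hk, hn]
    rw [← hd, hmon.coeff_natDegree, mul_one]
  rw [h2, hPPc] at hcoeff
  linarith



theorem core_identity (S : Finset ι) (y : ι → ℝ)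
    (hodd : Odd S.card) (hy : ∀ i ∈ S, 0 < y i) (hinj : Set.InjOn y S)
    (t : ℝ) (ht : 0 < t) :
    ∑ k ∈ S, ((y k - t) / (y k + t)) * ∏ l ∈ S.erase k, ((y l + y k) / (y l - y k)) =
      ∏ l ∈ S, ((y l - t) / (y l + t)) := by
  classical
  set n := S.card with hn
  have hn1 : 1 ≤ n := Nat.one_le_iff_ne_zero.2 (by rintro h; exact (by simp [h] : ¬ Odd 0) (h ▸ hodd))
  have hsub : ∀ k ∈ S, ∀ l ∈ S, l ≠ k → y l - y k ≠ 0 := by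
    intro k hk l hl hlk
    exact sub_ne_zero.2 fun h => hlk (hinj hl hk h)
  set Ck : ι → ℝ := fun k => ∏ l ∈ S.erase k, ((y l + y k) / (y l - y k)) with hCk
  have hA := sum_Ck S y hodd hy hinj
  rw [← hCk] at hA
  set NM : ℝ[X] := ∏ l ∈ S, (C (y l) - X) with hNM
  set LL : ℝ[X] := ∑ k ∈ S, C (Ck k) * ((C (y k) - X) * ∏ l ∈ S.erase k, (X + C (y l)))
    with hLL
  have hCkprod : ∀ j ∈ S, Ck j * ∏ l ∈ S.erase j, (y l - y j) = ∏ l ∈ S.erase j, (y l + y j) := by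
    intro j hj
    rw [hCk, ← prod_mul_distrib]
    exact prod_congr rfl fun l hl => div_mul_cancel₀ _
      (hsub j hj l (mem_of_mem_erase hl) (ne_of_mem_erase hl))
  have hEq : LL = NM := by
    have hD : LL - NM = 0 := by
      apply eq_zero_of_natDegree_lt_card_of_eval_eq_zero' _
        (insert (0:ℝ) (S.image fun l => -(y l)))
      · intro i hi
        rcases mem_insert.1 hi with rfl | hi
        · have h1 : eval 0 LL = ∏ l ∈ S, y l := by
            rw [hLL, eval_finset_sum]
            have : ∀ k ∈ S, eval 0 (C (Ck k) * ((C (y k) - X) * ∏ l ∈ S.erase k, (X + C (y l))))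
                = Ck k * ∏ l ∈ S, y l := by
              intro k hk
              rw [eval_mul, eval_C, eval_mul, eval_sub, eval_C, eval_X, eval_prod]
              rw [prod_congr rfl (fun l _ => by simp : ∀ l ∈ S.erase k,
                eval 0 (X + C (y l)) = y l)]
              rw [sub_zero, Finset.mul_prod_erase S _ hk]
            rw [Finset.sum_congr rfl this, ← Finset.sum_mul, hA, one_mul]
          have h2 : eval 0 NM = ∏ l ∈ S, y l := by
            rw [hNM, eval_prod]; exact prod_congr rfl fun l _ => by simp
          simp [h1, h2]
        · obtain ⟨j, hj, rfl⟩ := mem_image.1 hi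
          have hNMj : eval (-(y j)) NM = (y j + y j) * ∏ l ∈ S.erase j, (y l + y j) := by
            rw [hNM, eval_prod]
            rw [prod_congr rfl (fun l _ => by simp [sub_neg_eq_add] : ∀ l ∈ S,
              eval (-(y j)) (C (y l) - X) = y l + y j)]
            exact (Finset.mul_prod_erase S _ hj).symm
          have hLLj : eval (-(y j)) LL = (y j + y j) * ∏ l ∈ S.erase j, (y l + y j) := by
            rw [hLL, eval_finset_sum]
            rw [Finset.sum_eq_single j]
            · rw [eval_mul, eval_C, eval_mul, eval_sub, eval_C, eval_X, eval_prod]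
              rw [prod_congr rfl (fun l _ => by simp; ring : ∀ l ∈ S.erase j,
                eval (-(y j)) (X + C (y l)) = y l - y j)]
              rw [← hCkprod j hj]
              ring
            · intro k hk hkj
              rw [eval_mul, eval_mul, eval_prod]
              have : eval (-(y j)) (X + C (y j)) = 0 := by simp
              rw [prod_eq_zero (mem_erase.2 ⟨Ne.symm hkj, hj⟩) this, mul_zero, mul_zero]
            · intro h; exact absurd hj h
          rw [eval_sub, hNMj, hLLj, sub_self]
      · have hdegNM : NM.natDegree ≤ n := by
          refine le_trans (natDegree_prod_le _ _) ?_
          refine le_trans (Finset.sum_le_card_nsmul _ _ 1 fun l _ => ?_)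
            (by simp only [smul_eq_mul, mul_one]; omega)
          have : (C (y l) - X : ℝ[X]) = -(X - C (y l)) := by ring
          rw [this, natDegree_neg, natDegree_X_sub_C]
        have hdegLL : LL.natDegree ≤ n := by
          refine le_trans (natDegree_sum_le _ _) ?_
          rw [Finset.fold_max_le]
          refine ⟨Nat.zero_le _, fun k hk => ?_⟩
          refine le_trans (natDegree_C_mul_le _ _) ?_
          refine le_trans natDegree_mul_le ?_
          have hd1 : (C (y k) - X : ℝ[X]).natDegree = 1 := by
            have : (C (y k) - X : ℝ[X]) = -(X - C (y k)) := by ring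
            rw [this, natDegree_neg, natDegree_X_sub_C]
          have hd2 : (∏ l ∈ S.erase k, (X + C (y l)) : ℝ[X]).natDegree ≤ n - 1 := by
            refine le_trans (natDegree_prod_le _ _) ?_
            refine le_trans (Finset.sum_le_card_nsmul _ _ 1 fun l _ =>
              by simp [natDegree_X_add_C]) ?_
            simp only [smul_eq_mul, mul_one, card_erase_of_mem hk]; omega
          omega
        have hcard : (insert (0:ℝ) (S.image fun l => -(y l))).card = n + 1 := by
          rw [card_insert_of_notMem, card_image_of_injOn]
          · intro a ha b hb h
            exact hinj ha hb (neg_injective h)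
          · intro h
            obtain ⟨j, hj, hjj⟩ := mem_image.1 h
            have := hy j hj; linarith
        rw [hcard]
        have := natDegree_sub_le LL NM
        omega
    linear_combination hD
  -- evaluate at t
  have hev := congrArg (eval t) hEq
  rw [hLL, hNM, eval_finset_sum, eval_prod] at hev
  rw [prod_congr rfl (fun l _ => by simp : ∀ l ∈ S,
    eval t (C (y l) - X) = y l - t)] at hev
  rw [Finset.sum_congr rfl (fun k hk => by
    rw [eval_mul, eval_C, eval_mul, eval_sub, eval_C, eval_X, eval_prod,
      prod_congr rfl (fun l _ => by simp : ∀ l ∈ S.erase k,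
        eval t (X + C (y l)) = t + y l)] : ∀ k ∈ S,
      eval t (C (Ck k) * ((C (y k) - X) * ∏ l ∈ S.erase k, (X + C (y l))))
        = Ck k * ((y k - t) * ∏ l ∈ S.erase k, (t + y l)))] at hev
  -- divide by ∏ (y l + t)
  have hPTpos : ∀ l ∈ S, 0 < y l + t := fun l hl => by have := hy l hl; linarith
  have hPT : (∏ l ∈ S, (y l + t)) ≠ 0 := ne_of_gt (prod_pos hPTpos)
  rw [prod_div_distrib, ← hev, Finset.sum_div]
  refine Finset.sum_congr rfl fun k hk => ?_
  have hkt : y k + t ≠ 0 := ne_of_gt (hPTpos k hk)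
  have hPe : (∏ l ∈ S.erase k, (y l + t)) ≠ 0 :=
    ne_of_gt (prod_pos fun l hl => hPTpos l (mem_of_mem_erase hl))
  have hsplit : (∏ l ∈ S, (y l + t)) = (y k + t) * ∏ l ∈ S.erase k, (y l + t) :=
    (Finset.mul_prod_erase S _ hk).symm
  have hcomm : (∏ l ∈ S.erase k, (t + y l)) = ∏ l ∈ S.erase k, (y l + t) :=
    prod_congr rfl fun l _ => add_comm _ _
  rw [hcomm, hsplit]
  rw [show Ck k * ((y k - t) * ∏ l ∈ S.erase k, (y l + t))
      = (Ck k * (y k - t)) * ∏ l ∈ S.erase k, (y l + t) from by ring]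
  rw [mul_div_mul_right _ _ hPe]
  ring


section QQ

variable {N : ℕ}

/-- matrix entry -/
noncomputable def fent (x : Fin N → ℝ) (a b : Fin N) : ℝ := (x b - x a) / (x b + x a)

lemma fent_anti (x : Fin N → ℝ) (a b : Fin N) : fent x a b = -fent x b a := by
  unfold fent
  rw [add_comm (x a) (x b), ← neg_div, neg_sub]

lemma fent_ne_zero {x : Fin N → ℝ} (hx : ∀ j, 0 < x j) (hinj : Function.Injective x)
    {a b : Fin N} (h : a ≠ b) : fent x a b ≠ 0 := by
  unfold fent
  apply div_ne_zero
  · exact sub_ne_zero.2 fun e => h (hinj e.symm)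
  · have := hx a; have := hx b; positivity

/-- product of entries over increasing pairs within `T` -/
noncomputable def QQ (x : Fin N → ℝ) (T : Finset (Fin N)) : ℝ :=
  ∏ c ∈ T, ∏ d ∈ T.filter (fun d => c < d), fent x c d

lemma QQ_ne_zero {x : Fin N → ℝ} (hx : ∀ j, 0 < x j) (hinj : Function.Injective x)
    (T : Finset (Fin N)) : QQ x T ≠ 0 := by
  unfold QQ
  rw [Finset.prod_ne_zero_iff]
  intro c _
  rw [Finset.prod_ne_zero_iff]
  intro d hd
  exact fent_ne_zero hx hinj (ne_of_lt (Finset.mem_filter.1 hd).2)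

lemma QQ_erase (x : Fin N → ℝ) {T : Finset (Fin N)} {a : Fin N} (ha : a ∈ T) :
    QQ x T = ((∏ c ∈ (T.erase a).filter (fun c => c < a), fent x c a) *
      ∏ d ∈ (T.erase a).filter (fun d => a < d), fent x a d) * QQ x (T.erase a) := by
  conv_lhs => rw [QQ, ← Finset.insert_erase ha]
  rw [Finset.prod_insert (Finset.notMem_erase a T)]
  rw [Finset.filter_insert]
  rw [if_neg (lt_irrefl a)]
  have hinner : ∀ c ∈ T.erase a,
      (∏ d ∈ (insert a (T.erase a)).filter (fun d => c < d), fent x c d)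
        = (if c < a then fent x c a else 1) *
          ∏ d ∈ (T.erase a).filter (fun d => c < d), fent x c d := by
    intro c hc
    rw [Finset.filter_insert]
    by_cases h : c < a
    · rw [if_pos h, if_pos h, Finset.prod_insert]
      simp only [Finset.mem_filter]
      exact fun hmem => (Finset.notMem_erase a T) hmem.1
    · rw [if_neg h, if_neg h, one_mul]
  rw [Finset.prod_congr rfl hinner, Finset.prod_mul_distrib]
  have hsplit : (∏ c ∈ T.erase a, (if c < a then fent x c a else 1))
      = ∏ c ∈ (T.erase a).filter (fun c => c < a), fent x c a := by
    rw [Finset.prod_ite, Finset.prod_const_one, mul_one]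
  rw [hsplit, QQ]
  ring

lemma QQ_erase' (x : Fin N → ℝ) {T : Finset (Fin N)} {a : Fin N} (ha : a ∈ T) :
    QQ x T = ((-1 : ℝ) ^ ((T.erase a).filter (fun c => c < a)).card *
      ∏ l ∈ T.erase a, fent x a l) * QQ x (T.erase a) := by
  rw [QQ_erase x ha]
  congr 1
  have h1 : (∏ c ∈ (T.erase a).filter (fun c => c < a), fent x c a)
      = (-1 : ℝ) ^ ((T.erase a).filter (fun c => c < a)).card *
        ∏ c ∈ (T.erase a).filter (fun c => c < a), fent x a c := by
    rw [← Finset.prod_const, ← Finset.prod_mul_distrib]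
    exact Finset.prod_congr rfl fun c _ => by rw [fent_anti]; ring
  rw [h1, mul_assoc]
  congr 1
  have h2 : (T.erase a).filter (fun d => a < d) = (T.erase a).filter (fun c => ¬ c < a) := by
    apply Finset.filter_congr
    intro c hc
    have hca : c ≠ a := Finset.ne_of_mem_erase hc
    simp only [not_lt, eq_iff_iff]
    exact ⟨fun h => h.le, fun h => h.lt_of_ne hca.symm⟩
  rw [h2, Finset.prod_filter_mul_prod_filter_not]

end QQ


section Row

variable {N : ℕ}

noncomputable def eps (j s : Fin N) : ℝ :=
  if s < j then (-1 : ℝ) ^ (j.1 + s.1) else (-1) ^ (j.1 + s.1 + 1)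

lemma neg_one_pow_inv (k : ℕ) : ((-1 : ℝ) ^ k)⁻¹ = (-1) ^ k := by
  rw [← inv_pow, inv_neg, inv_one]

theorem row_expansion (hN : Odd (N - 1)) (x : Fin N → ℝ)
    (hx : ∀ j, 0 < x j) (hinj : Function.Injective x) (j : Fin N) :
    ∑ s ∈ Finset.univ.erase j,
        eps j s * fent x j s * QQ x ((Finset.univ.erase j).erase s)
      = QQ x Finset.univ := by
  classical
  set S : Finset (Fin N) := Finset.univ.erase j with hS
  have hQjne : QQ x S ≠ 0 := QQ_ne_zero hx hinj S
  -- outer split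
  have hcard1 : ((Finset.univ.erase j).filter (fun c => c < j)).card = j.1 := by
    have : (Finset.univ.erase j).filter (fun c => c < j) = Finset.Iio j := by
      ext c
      simp only [Finset.mem_filter, Finset.mem_erase, Finset.mem_univ, Finset.mem_Iio, true_and,
        and_iff_right_iff_imp]
      exact fun h => ⟨ne_of_lt h, trivial⟩
    rw [this, Fin.card_Iio]
  have hQj : QQ x Finset.univ
      = ((-1 : ℝ) ^ j.1 * ∏ l ∈ S, fent x j l) * QQ x S := by
    rw [QQ_erase' x (Finset.mem_univ j), hcard1]
  -- per term rewriting
  have hterm : ∀ s ∈ S,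
      eps j s * fent x j s * QQ x (S.erase s)
        = ((-1 : ℝ) ^ j.1 * (fent x j s * ∏ l ∈ S.erase s, (fent x s l)⁻¹)) * QQ x S := by
    intro s hs
    have hsj : s ≠ j := Finset.ne_of_mem_erase hs
    have hsS : s ∈ S := hs
    set c : ℕ := ((S.erase s).filter (fun c => c < s)).card with hc
    have hPs : (∏ l ∈ S.erase s, fent x s l) ≠ 0 := by
      rw [Finset.prod_ne_zero_iff]
      intro l hl
      exact fent_ne_zero hx hinj (Finset.ne_of_mem_erase hl).symm
    have hne : ((-1 : ℝ) ^ c * ∏ l ∈ S.erase s, fent x s l) ≠ 0 :=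
      mul_ne_zero (by positivity) hPs
    have hQs := QQ_erase' x hsS
    rw [← hc] at hQs
    have hQjs : QQ x (S.erase s)
        = ((-1 : ℝ) ^ c * ∏ l ∈ S.erase s, fent x s l)⁻¹ * QQ x S := by
      rw [hQs, inv_mul_cancel_left₀ hne]
    rw [hQjs]
    have hcval : c = s.1 - (if j < s then 1 else 0) := by
      rw [hc]
      have hset : (S.erase s).filter (fun c => c < s) = (Finset.Iio s).erase j := by
        ext a
        simp only [Finset.mem_filter, Finset.mem_erase, Finset.mem_Iio, hS, Finset.mem_univ,
          true_and, and_true]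
        constructor
        · rintro ⟨⟨has, haj⟩, halt⟩; exact ⟨haj, halt⟩
        · rintro ⟨haj, halt⟩; exact ⟨⟨ne_of_lt halt, haj⟩, halt⟩
      rw [hset]
      by_cases hjs : j < s
      · rw [if_pos hjs, Finset.card_erase_of_mem (Finset.mem_Iio.2 hjs), Fin.card_Iio]
      · rw [if_neg hjs, Finset.erase_eq_of_notMem (by simp [Finset.mem_Iio, hjs]), Fin.card_Iio]
        omega
    have hsign : eps j s * ((-1 : ℝ) ^ c)⁻¹ = (-1) ^ j.1 := by
      rw [neg_one_pow_inv, hcval]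
      rcases lt_or_gt_of_ne hsj with hlt | hgt
      · rw [eps, if_pos hlt, if_neg (lt_asymm hlt)]
        rw [← pow_add, show j.1 + s.1 + (s.1 - 0) = j.1 + 2 * s.1 from by omega,
          pow_add, pow_mul, neg_one_sq, one_pow, mul_one]
      · have hs1 : 1 ≤ s.1 := by
          have : j.1 < s.1 := hgt
          omega
        rw [eps, if_neg (lt_asymm hgt), if_pos hgt]
        rw [← pow_add, show j.1 + s.1 + 1 + (s.1 - 1) = j.1 + 2 * s.1 from by omega,
          pow_add, pow_mul, neg_one_sq, one_pow, mul_one]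
    rw [mul_inv, ← Finset.prod_inv_distrib]
    calc eps j s * fent x j s *
          ((((-1:ℝ) ^ c)⁻¹ * ∏ l ∈ S.erase s, (fent x s l)⁻¹) * QQ x S)
        = (eps j s * ((-1:ℝ) ^ c)⁻¹) *
            (fent x j s * ∏ l ∈ S.erase s, (fent x s l)⁻¹) * QQ x S := by ring
      _ = _ := by rw [hsign]
  rw [Finset.sum_congr rfl hterm, ← Finset.sum_mul, hQj]
  congr 1
  rw [← Finset.mul_sum]
  congr 1
  -- core identity application
  have hScard : S.card = N - 1 := by
    rw [hS, Finset.card_erase_of_mem (Finset.mem_univ j)]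
    simp
  have hcore := core_identity S x (by rw [hScard]; exact hN)
    (fun i _ => hx i) (hinj.injOn) (x j) (hx j)
  calc ∑ s ∈ S, fent x j s * ∏ l ∈ S.erase s, (fent x s l)⁻¹
      = ∑ s ∈ S, ((x s - x j) / (x s + x j)) *
          ∏ l ∈ S.erase s, ((x l + x s) / (x l - x s)) := by
        refine Finset.sum_congr rfl fun s _ => ?_
        congr 1
        refine Finset.prod_congr rfl fun l _ => ?_
        rw [fent, inv_div]
    _ = ∏ l ∈ S, ((x l - x j) / (x l + x j)) := hcore
    _ = ∏ l ∈ S, fent x j l := rfl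

end Row


section Perm

open Equiv Equiv.Perm

noncomputable def Phi {n : ℕ} (j : Fin (n+1)) (ρ : Perm (Fin n)) : Perm (Fin (n+1)) :=
  (Fin.cycleRange j)⁻¹ * Equiv.Perm.decomposeFin.symm (0, ρ)

lemma Phi_zero {n : ℕ} (j : Fin (n+1)) (ρ : Perm (Fin n)) : Phi j ρ 0 = j := by
  rw [Phi, Perm.mul_apply, Equiv.Perm.decomposeFin_symm_apply_zero]
  exact Fin.cycleRange_symm_zero j

lemma Phi_succ {n : ℕ} (j : Fin (n+1)) (ρ : Perm (Fin n)) (i : Fin n) :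
    Phi j ρ i.succ = j.succAbove (ρ i) := by
  rw [Phi, Perm.mul_apply, Equiv.Perm.decomposeFin_symm_apply_succ, Equiv.swap_self,
    Equiv.refl_apply]
  exact Fin.cycleRange_symm_succ j (ρ i)

lemma Phi_sign {n : ℕ} (j : Fin (n+1)) (ρ : Perm (Fin n)) :
    Perm.sign (Phi j ρ) = (-1) ^ (j : ℕ) * Perm.sign ρ := by
  rw [Phi, map_mul, map_inv, Fin.sign_cycleRange, Equiv.Perm.decomposeFin.symm_sign,
    if_pos rfl, one_mul]
  congr 1

lemma Phi_bijective {n : ℕ} :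
    Function.Bijective (fun p : Fin (n+1) × Perm (Fin n) => Phi p.1 p.2) := by
  rw [Fintype.bijective_iff_injective_and_card]
  constructor
  · rintro ⟨j, ρ⟩ ⟨j', ρ'⟩ h
    simp only at h
    have h0 : j = j' := by
      rw [← Phi_zero j ρ, ← Phi_zero j' ρ', h]
    subst h0
    have h1 : Equiv.Perm.decomposeFin.symm (0, ρ) = Equiv.Perm.decomposeFin.symm (0, ρ') :=
      mul_left_cancel h
    have h2 := (Equiv.Perm.decomposeFin.symm).injective h1
    simp only [Prod.mk.injEq] at h2
    simp [h2.2]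
  · simp [Fintype.card_perm, Fintype.card_prod, Fintype.card_fin, Nat.factorial_succ]

lemma perm_sum {n : ℕ} (g : Perm (Fin (n+1)) → ℝ) :
    ∑ σ : Perm (Fin (n+1)), g σ = ∑ j : Fin (n+1), ∑ ρ : Perm (Fin n), g (Phi j ρ) := by
  have hb := Fintype.sum_bijective _ (Phi_bijective (n := n))
      (fun p => g (Phi p.1 p.2)) g fun p => rfl
  calc ∑ σ : Perm (Fin (n+1)), g σ
      = ∑ p : Fin (n+1) × Perm (Fin n), g (Phi p.1 p.2) := hb.symm
    _ = _ := Fintype.sum_prod_type _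

end Perm


section Expand

open Equiv Equiv.Perm

lemma sum_sign_prod_eq (m : ℕ) (B : Matrix (Fin (2*m)) (Fin (2*m)) ℝ) :
    ∑ τ : Perm (Fin (2*m)), ((Perm.sign τ : ℤ) : ℝ) *
        ∏ i : Fin m, B (τ ⟨2*i.1, by have := i.isLt; omega⟩) (τ ⟨2*i.1+1, by have := i.isLt; omega⟩)
      = 2^m * (m.factorial : ℝ) * pfaffian B := by
  rw [pfaffian, ← mul_assoc, mul_one_div, div_self, one_mul]
  have : (0:ℝ) < 2^m * (m.factorial : ℝ) := by positivity
  exact ne_of_gt this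

lemma pfaffian_def' (m : ℕ) (A : Matrix (Fin (2*(m+1))) (Fin (2*(m+1))) ℝ) :
    pfaffian A = (1/(2^(m+1) * (((m+1).factorial) : ℝ))) *
      ∑ σ : Perm (Fin (2*m+1+1)), ((Perm.sign σ : ℤ) : ℝ) *
        ∏ i : Fin (m+1), A (σ ⟨2*i.1, by have := i.isLt; omega⟩)
          (σ ⟨2*i.1+1, by have := i.isLt; omega⟩) := rfl

lemma pfaffian_expand (m : ℕ) (A : Matrix (Fin (2*(m+1))) (Fin (2*(m+1))) ℝ) :
    pfaffian A = (1/(2*((m:ℝ)+1))) *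
      ∑ j : Fin (2*m+2), ∑ k : Fin (2*m+1),
        ((-1:ℝ)^(j.1+k.1)) * A j (Fin.succAbove j k) *
          pfaffian (A.submatrix
            (fun a : Fin (2*m) => Fin.succAbove j (Fin.succAbove k a))
            (fun a : Fin (2*m) => Fin.succAbove j (Fin.succAbove k a))) := by
  have key : ∀ (j : Fin (2*m+2)) (k : Fin (2*m+1)) (τ : Perm (Fin (2*m))),
      ((Perm.sign (Phi j (Phi k τ)) : ℤ) : ℝ) *
        ∏ i : Fin (m+1), A (Phi j (Phi k τ) ⟨2*i.1, by have := i.isLt; omega⟩)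
          (Phi j (Phi k τ) ⟨2*i.1+1, by have := i.isLt; omega⟩)
      = ((-1:ℝ)^(j.1+k.1) * A j (Fin.succAbove j k)) *
        (((Perm.sign τ : ℤ) : ℝ) *
          ∏ i : Fin m, (A.submatrix
            (fun a : Fin (2*m) => Fin.succAbove j (Fin.succAbove k a))
            (fun a : Fin (2*m) => Fin.succAbove j (Fin.succAbove k a)))
              (τ ⟨2*i.1, by have := i.isLt; omega⟩)
              (τ ⟨2*i.1+1, by have := i.isLt; omega⟩)) := by
    intro j k τ
    have hsig : ((Perm.sign (Phi j (Phi k τ)) : ℤ) : ℝ)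
        = (-1:ℝ)^(j.1+k.1) * ((Perm.sign τ : ℤ) : ℝ) := by
      rw [Phi_sign, Phi_sign]
      push_cast [pow_add]
      ring
    have hprod : (∏ i : Fin (m+1), A (Phi j (Phi k τ) ⟨2*i.1, by have := i.isLt; omega⟩)
          (Phi j (Phi k τ) ⟨2*i.1+1, by have := i.isLt; omega⟩))
        = A j (Fin.succAbove j k) *
          ∏ i : Fin m, (A.submatrix
            (fun a : Fin (2*m) => Fin.succAbove j (Fin.succAbove k a))
            (fun a : Fin (2*m) => Fin.succAbove j (Fin.succAbove k a)))
              (τ ⟨2*i.1, by have := i.isLt; omega⟩)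
              (τ ⟨2*i.1+1, by have := i.isLt; omega⟩) := by
      rw [Fin.prod_univ_succ]
      congr 1
      · have e0 : (⟨2*((0: Fin (m+1)).1), by have := (0: Fin (m+1)).isLt; omega⟩
            : Fin (2*(m+1))) = (0 : Fin (2*m+2)) := by
          ext; simp
        have e1 : (⟨2*((0: Fin (m+1)).1)+1, by have := (0: Fin (m+1)).isLt; omega⟩
            : Fin (2*(m+1))) = Fin.succ (0 : Fin (2*m+1)) := by
          ext; simp; exact (Nat.mod_eq_of_lt (by omega)).symm
        rw [e0, e1, Phi_zero, Phi_succ, Phi_zero]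
      · refine Finset.prod_congr rfl fun i _ => ?_
        have ea : (⟨2*((Fin.succ i).1), by have := (Fin.succ i).isLt; omega⟩
            : Fin (2*(m+1)))
            = Fin.succ (Fin.succ (⟨2*i.1, by have := i.isLt; omega⟩ : Fin (2*m))) := by
          ext; simp [Fin.val_succ]; omega
        have eb : (⟨2*((Fin.succ i).1)+1, by have := (Fin.succ i).isLt; omega⟩
            : Fin (2*(m+1)))
            = Fin.succ (Fin.succ (⟨2*i.1+1, by have := i.isLt; omega⟩ : Fin (2*m))) := by
          ext; simp [Fin.val_succ]; omega
        rw [ea, eb, Phi_succ, Phi_succ, Phi_succ, Phi_succ, Matrix.submatrix_apply]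
    rw [hsig, hprod]
    ring
  rw [pfaffian_def', perm_sum]
  have h2 : ∀ j : Fin (2*m+2),
      (∑ ρ : Perm (Fin (2*m+1)), ((Perm.sign (Phi j ρ) : ℤ) : ℝ) *
        ∏ i : Fin (m+1), A (Phi j ρ ⟨2*i.1, by have := i.isLt; omega⟩)
          (Phi j ρ ⟨2*i.1+1, by have := i.isLt; omega⟩))
      = ∑ k : Fin (2*m+1), (2^m * (m.factorial : ℝ)) *
          (((-1:ℝ)^(j.1+k.1)) * A j (Fin.succAbove j k) *
            pfaffian (A.submatrix
              (fun a : Fin (2*m) => Fin.succAbove j (Fin.succAbove k a))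
              (fun a : Fin (2*m) => Fin.succAbove j (Fin.succAbove k a)))) := by
    intro j
    rw [perm_sum]
    refine Finset.sum_congr rfl fun k _ => ?_
    rw [Finset.sum_congr rfl fun τ _ => key j k τ, ← Finset.mul_sum, sum_sign_prod_eq]
    ring
  rw [Finset.sum_congr rfl fun j _ => h2 j]
  have h3 : ∀ j : Fin (2*m+2), (∑ k : Fin (2*m+1), (2^m * (m.factorial : ℝ)) *
      (((-1:ℝ)^(j.1+k.1)) * A j (Fin.succAbove j k) *
        pfaffian (A.submatrix
          (fun a : Fin (2*m) => Fin.succAbove j (Fin.succAbove k a))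
          (fun a : Fin (2*m) => Fin.succAbove j (Fin.succAbove k a)))))
      = (2^m * (m.factorial : ℝ)) * ∑ k : Fin (2*m+1),
          (((-1:ℝ)^(j.1+k.1)) * A j (Fin.succAbove j k) *
            pfaffian (A.submatrix
              (fun a : Fin (2*m) => Fin.succAbove j (Fin.succAbove k a))
              (fun a : Fin (2*m) => Fin.succAbove j (Fin.succAbove k a)))) :=
    fun j => (Finset.mul_sum _ _ _).symm
  rw [Finset.sum_congr rfl fun j _ => h3 j, ← Finset.mul_sum, ← mul_assoc]
  congr 1
  have hfac : ((m+1).factorial : ℝ) = ((m:ℝ)+1) * (m.factorial : ℝ) := by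
    rw [Nat.factorial_succ]; push_cast; ring
  have hmf : (m.factorial : ℝ) ≠ 0 := by positivity
  have h2m : (2:ℝ)^m ≠ 0 := by positivity
  have hm1 : ((m:ℝ)+1) ≠ 0 := by positivity
  rw [pow_succ, hfac]
  field_simp

end Expand


section Assemble

lemma QQ_univ {N : ℕ} (x : Fin N → ℝ) :
    QQ x Finset.univ = ∏ c : Fin N, ∏ d ∈ Finset.Ioi c, fent x c d := by
  rw [QQ]
  refine Finset.prod_congr rfl fun c _ => ?_
  congr 1
  ext d
  simp [Finset.mem_Ioi]

lemma prod_image_succAbove {m : ℕ} (x : Fin (2*m+2) → ℝ) (j : Fin (2*m+2))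
    (k : Fin (2*m+1)) :
    (∏ a : Fin (2*m), ∏ b ∈ Finset.Ioi a,
        fent x (Fin.succAbove j (Fin.succAbove k a)) (Fin.succAbove j (Fin.succAbove k b)))
      = QQ x ((Finset.univ.erase j).erase (Fin.succAbove j k)) := by
  classical
  set h : Fin (2*m) → Fin (2*m+2) := fun a => Fin.succAbove j (Fin.succAbove k a) with hh
  have hinj : Function.Injective h :=
    (Fin.succAbove_right_injective (p := j)).comp (Fin.succAbove_right_injective (p := k))
  have hmono : StrictMono h :=
    (Fin.strictMono_succAbove j).comp (Fin.strictMono_succAbove k)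
  have himg : Finset.image h Finset.univ
      = (Finset.univ.erase j).erase (Fin.succAbove j k) := by
    ext c
    simp only [Finset.mem_image, Finset.mem_univ, true_and, Finset.mem_erase, and_true]
    constructor
    · rintro ⟨a, rfl⟩
      refine ⟨?_, Fin.succAbove_ne j _⟩
      intro e
      exact Fin.succAbove_ne k a (Fin.succAbove_right_injective (p := j) e)
    · rintro ⟨hcs, hcj⟩
      obtain ⟨d, rfl⟩ := Fin.exists_succAbove_eq (Ne.symm hcj).symm
      have hdk : d ≠ k := fun e => hcs (by rw [e])
      obtain ⟨a, rfl⟩ := Fin.exists_succAbove_eq (Ne.symm hdk).symm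
      exact ⟨a, rfl⟩
  rw [QQ, ← himg, Finset.prod_image (fun a _ b _ e => hinj e)]
  refine Finset.prod_congr rfl fun a _ => ?_
  have hfil : (Finset.image h Finset.univ).filter (fun d => h a < d)
      = Finset.image h (Finset.Ioi a) := by
    ext d
    simp only [Finset.mem_filter, Finset.mem_image, Finset.mem_univ, true_and, Finset.mem_Ioi]
    constructor
    · rintro ⟨⟨b, rfl⟩, hlt⟩
      exact ⟨b, hmono.lt_iff_lt.1 hlt, rfl⟩
    · rintro ⟨b, hab, rfl⟩
      exact ⟨⟨b, rfl⟩, hmono hab⟩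
  rw [hfil, Finset.prod_image (fun a _ b _ e => hinj e)]

lemma eps_succAbove {n : ℕ} (j : Fin (n+1)) (k : Fin n) :
    eps j (Fin.succAbove j k) = (-1:ℝ)^(j.1 + k.1) := by
  rcases lt_or_ge (Fin.castSucc k) j with hlt | hle
  · rw [Fin.succAbove_of_castSucc_lt _ _ hlt, eps, if_pos hlt, Fin.coe_castSucc]
  · rw [Fin.succAbove_of_le_castSucc _ _ hle, eps, if_neg]
    · rw [Fin.val_succ, show j.1 + (k.1+1) + 1 = (j.1 + k.1) + 2*1 from by ring,
        pow_add, pow_mul, neg_one_sq, one_pow, mul_one]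
    · intro hcon
      have h1 : j.1 ≤ k.1 := by simpa [Fin.le_def] using hle
      have h2 : k.1 + 1 < j.1 := by simpa [Fin.lt_def] using hcon
      omega

end Assemble


theorem schur_aux : ∀ (m : ℕ) (x : Fin (2*m) → ℝ), (∀ j, 0 < x j) → Function.Injective x →
    pfaffian (Matrix.of fun j k : Fin (2 * m) => (x k - x j) / (x k + x j)) =
      ∏ j : Fin (2 * m), ∏ k ∈ Finset.Ioi j, (x k - x j) / (x k + x j) := by
  intro m
  induction m with
  | zero =>
    intro x hx hinj
    rw [pfaffian]
    have huniv : (Finset.univ : Finset (Equiv.Perm (Fin (2*0)))) = {1} := by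
      apply Finset.eq_singleton_iff_unique_mem.2
      refine ⟨Finset.mem_univ _, fun σ _ => Equiv.ext fun a => Fin.elim0 a⟩
    rw [huniv, Finset.sum_singleton]
    simp
  | succ m IH =>
    intro x hx hinj
    have hstep : ∀ (j : Fin (2*m+2)) (k : Fin (2*m+1)),
        pfaffian ((Matrix.of fun a b : Fin (2*(m+1)) => (x b - x a)/(x b + x a)).submatrix
          (fun a : Fin (2*m) => Fin.succAbove j (Fin.succAbove k a))
          (fun a : Fin (2*m) => Fin.succAbove j (Fin.succAbove k a)))
        = QQ x ((Finset.univ.erase j).erase (Fin.succAbove j k)) := by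
      intro j k
      have hinjh : Function.Injective
          (fun a : Fin (2*m) => Fin.succAbove j (Fin.succAbove k a)) :=
        (Fin.succAbove_right_injective (p := j)).comp (Fin.succAbove_right_injective (p := k))
      have hIH := IH (fun a => x (Fin.succAbove j (Fin.succAbove k a)))
        (fun a => hx _) (fun a b e => hinjh (hinj e))
      have hmat : (Matrix.of fun a b : Fin (2*(m+1)) => (x b - x a)/(x b + x a)).submatrix
          (fun a : Fin (2*m) => Fin.succAbove j (Fin.succAbove k a))
          (fun a : Fin (2*m) => Fin.succAbove j (Fin.succAbove k a))
          = Matrix.of (fun a b : Fin (2*m) =>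
              ((fun c => x (Fin.succAbove j (Fin.succAbove k c))) b
                - (fun c => x (Fin.succAbove j (Fin.succAbove k c))) a) /
              ((fun c => x (Fin.succAbove j (Fin.succAbove k c))) b
                + (fun c => x (Fin.succAbove j (Fin.succAbove k c))) a)) := rfl
      rw [hmat, hIH, ← prod_image_succAbove x j k]
      rfl
    rw [pfaffian_expand]
    have hrow : ∀ j : Fin (2*m+2),
        ∑ s ∈ Finset.univ.erase j,
          eps j s * fent x j s * QQ x ((Finset.univ.erase j).erase s)
        = QQ x Finset.univ :=
      row_expansion (N := 2*m+2) (by exact ⟨m, by omega⟩) x hx hinj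
    have hinner : ∀ j : Fin (2*m+2),
        (∑ k : Fin (2*m+1),
          ((-1:ℝ)^(j.1+k.1)) *
            (Matrix.of fun a b : Fin (2*(m+1)) => (x b - x a)/(x b + x a)) j
              (Fin.succAbove j k) *
            pfaffian ((Matrix.of fun a b : Fin (2*(m+1)) =>
                (x b - x a)/(x b + x a)).submatrix
              (fun a : Fin (2*m) => Fin.succAbove j (Fin.succAbove k a))
              (fun a : Fin (2*m) => Fin.succAbove j (Fin.succAbove k a))))
        = QQ x Finset.univ := by
      intro j
      rw [← hrow j]
      refine Finset.sum_bij (fun k _ => Fin.succAbove j k) ?_ ?_ ?_ ?_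
      · intro k _
        exact Finset.mem_erase.2 ⟨Fin.succAbove_ne j k, Finset.mem_univ _⟩
      · intro a _ b _ e
        exact Fin.succAbove_right_injective (p := j) e
      · intro s hs
        obtain ⟨k, hk⟩ := Fin.exists_succAbove_eq (Ne.symm (Finset.ne_of_mem_erase hs)).symm
        exact ⟨k, Finset.mem_univ _, hk⟩
      · intro k _
        rw [hstep j k, ← eps_succAbove j k]
        rfl
    rw [Finset.sum_congr rfl fun j _ => hinner j, Finset.sum_const, Finset.card_univ,
      Fintype.card_fin, QQ_univ]
    have : ((2*m+2 : ℕ) : ℝ) = 2*((m:ℝ)+1) := by push_cast; ring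
    rw [nsmul_eq_mul, this, ← mul_assoc, one_div, inv_mul_cancel₀ (by positivity), one_mul]
    rfl

end SchurAux

/-- Schur's Pfaffian identity (even case). -/
theorem schur_pfaffian (m : ℕ) (hm : 0 < m) (x : Fin (2 * m) → ℝ)
    (hx : ∀ j, 0 < x j) (hinj : Function.Injective x) :
    pfaffian (Matrix.of fun j k : Fin (2 * m) => (x k - x j) / (x k + x j)) =
      ∏ j : Fin (2 * m), ∏ k ∈ Finset.Ioi j, (x k - x j) / (x k + x j) := by
  exact SchurAux.schur_aux m x hx hinj
end
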